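/- Let k ∈ {1,…,n} and let x : ℝ → ℝ. If x(s) tends to a limit L as s → tᵏ from the right, then the difference quotient (x(s) − x(tᵏ))/(g_s(s) − g_s(tᵏ)) tends to (L − x(tᵏ))·2ᵏ as s → tᵏ from the right. (That is, at a jump point of g_s the Stieltjes g_s-derivative of x equals the jump of x divided by the jump of g_s.) -/

import Mathlib

open Filter Set

/-- At a jump point `tᵏ` (`k ∈ {1,…,n}`) of the derivator `g_s`, if
`x(s) → L` as `s → tᵏ⁺`, then the Stieltjes difference quotient
`(x(s) − x(tᵏ))/(g_s(s) − g_s(tᵏ))` tends to `(L − x(tᵏ))·2ᵏ` as `s → tᵏ⁺`: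
the Stieltjes derivative equals the jump of `x` divided by the jump of `g_s`. -/
theorem stieltjes_derivative_at_jump_point
    (T : ℝ) (hT : 0 < T) (n : ℕ) (tk : ℕ → ℝ)
    (ht0 : tk 0 = 0) (htmono : ∀ k < n, tk k < tk (k + 1)) (htn : tk n < T)
    (g : ℝ → ℝ)
    (hg : ∀ s : ℝ, g s = s + ∑ k ∈ Finset.Icc 1 n,
      (if tk k < s then ((2 : ℝ) ^ k)⁻¹ else 0))
    (k : ℕ) (hk1 : 1 ≤ k) (hkn : k ≤ n)
    (x : ℝ → ℝ) (L : ℝ)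
    (hx : Tendsto x (nhdsWithin (tk k) (Set.Ioi (tk k))) (nhds L)) :
    Tendsto (fun s => (x s - x (tk k)) / (g s - g (tk k)))
      (nhdsWithin (tk k) (Set.Ioi (tk k)))
      (nhds ((L - x (tk k)) * 2 ^ k)) := by
  -- strict monotonicity of tk on [0, n]
  have mono : ∀ i j : ℕ, i < j → j ≤ n → tk i < tk j := by
    intro i j hij hjn
    induction j with
    | zero => omega
    | succ j ih =>
      have hjn' : j < n := by omega
      have h2 : tk j < tk (j + 1) := htmono j hjn'
      rcases Nat.lt_succ_iff_lt_or_eq.mp hij with h | h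
      · exact lt_trans (ih h (le_of_lt hjn')) h2
      · subst h; exact h2
  set b : ℝ := if h : k < n then tk (k + 1) else tk k + 1 with hb
  have hkb : tk k < b := by
    by_cases h : k < n
    · simp only [hb, dif_pos h]; exact htmono k h
    · simp only [hb, dif_neg h]; linarith
  have key : ∀ᶠ s in nhdsWithin (tk k) (Set.Ioi (tk k)),
      g s - g (tk k) = (s - tk k) + ((2 : ℝ) ^ k)⁻¹ := by
    filter_upwards [Ioo_mem_nhdsGT_of_mem ⟨le_refl _, hkb⟩] with s hs
    obtain ⟨hs1, hs2⟩ := hs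
    rw [hg s, hg (tk k)]
    have hsum : (∑ j ∈ Finset.Icc 1 n, (if tk j < s then ((2 : ℝ) ^ j)⁻¹ else 0))
        = (∑ j ∈ Finset.Icc 1 n, (if tk j < tk k then ((2 : ℝ) ^ j)⁻¹ else 0))
          + ((2 : ℝ) ^ k)⁻¹ := by
      have : ∀ j ∈ Finset.Icc 1 n,
          (if tk j < s then ((2 : ℝ) ^ j)⁻¹ else 0)
          = (if tk j < tk k then ((2 : ℝ) ^ j)⁻¹ else 0)
            + (if j = k then ((2 : ℝ) ^ k)⁻¹ else 0) := by
        intro j hj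
        simp only [Finset.mem_Icc] at hj
        rcases lt_trichotomy j k with hjk | hjk | hjk
        · have h1 : tk j < tk k := mono j k hjk hkn
          have h2 : tk j < s := lt_trans h1 hs1
          simp [h1, h2, Nat.ne_of_lt hjk]
        · subst hjk
          simp [hs1, lt_irrefl]
        · have hkln : k < n := lt_of_lt_of_le hjk hj.2
          have hble : b ≤ tk j := by
            simp only [hb, dif_pos hkln]
            rcases Nat.lt_or_ge (k + 1) j with h | h
            · exact le_of_lt (mono (k + 1) j h hj.2)
            · have : j = k + 1 := by omega
              simp [this]
          have h1 : ¬ tk j < s := not_lt.mpr (le_trans (le_of_lt hs2) hble)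
          have h2 : ¬ tk j < tk k := not_lt.mpr (le_of_lt (mono k j hjk hj.2))
          simp [h1, h2, Nat.ne_of_gt hjk]
      rw [Finset.sum_congr rfl this, Finset.sum_add_distrib,
        Finset.sum_ite_eq' (Finset.Icc 1 n) k (fun _ => ((2 : ℝ) ^ k)⁻¹)]
      simp [Finset.mem_Icc, hk1, hkn]
    rw [hsum]; ring
  have hden : Tendsto (fun s => g s - g (tk k))
      (nhdsWithin (tk k) (Set.Ioi (tk k))) (nhds (((2 : ℝ) ^ k)⁻¹)) := by
    have h1 : Tendsto (fun s : ℝ => (s - tk k) + ((2 : ℝ) ^ k)⁻¹)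
        (nhdsWithin (tk k) (Set.Ioi (tk k))) (nhds (((2 : ℝ) ^ k)⁻¹)) := by
      have : Tendsto (fun s : ℝ => (s - tk k) + ((2 : ℝ) ^ k)⁻¹)
          (nhds (tk k)) (nhds ((tk k - tk k) + ((2 : ℝ) ^ k)⁻¹)) := by
        exact ((continuous_id.sub continuous_const).add continuous_const).tendsto _
      simpa using this.mono_left nhdsWithin_le_nhds
    exact h1.congr' (key.mono fun s hs => hs.symm)
  have hnum : Tendsto (fun s => x s - x (tk k))
      (nhdsWithin (tk k) (Set.Ioi (tk k))) (nhds (L - x (tk k))) :=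
    hx.sub tendsto_const_nhds
  have hne : ((2 : ℝ) ^ k)⁻¹ ≠ 0 := by positivity
  have := hnum.div hden hne
  rw [div_inv_eq_mul] at this
  exact this
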